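/- If φ is two-point contractible on a closed forward-invariant set K, then for every x, y ∈ K, almost surely there is an unbounded sequence of times (t_n) with d(φ(t_n,ω)x, φ(t_n,ω)y) → 0 as n → ∞. -/

import Mathlib

open MeasureTheory ProbabilityTheory Filter Topology

/-- A (discrete-time) filtered random dynamical system over a memoryless stationary
noise space, on a metric space `X`. -/
structure MRDS (Ω X : Type*) [mΩ : MeasurableSpace Ω] [MetricSpace X]
    [mX : MeasurableSpace X] [BorelSpace X] where
  P : Measure Ω
  hprob : IsProbabilityMeasure P
  F : ℕ → MeasurableSpace Ω
  hle : ∀ t, F t ≤ mΩ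
  hmono : Monotone F
  θ : ℕ → Ω → Ω
  hθ0 : θ 0 = id
  hθadd : ∀ s t, θ (s + t) = θ s ∘ θ t
  hθmeas : ∀ s t, @Measurable Ω Ω (F (s + t)) (F s) (θ t)
  hθpres : ∀ t, MeasurePreserving (θ t) P P
  memless : ∀ s, Indep (F s) ((⨆ t, F t).comap (θ s)) P
  φ : ℕ → Ω → X → X
  hφcont : ∀ t ω, Continuous (φ t ω)
  hφmeas : ∀ t, @Measurable (Ω × X) X ((F t).prod mX) mX (fun p => φ t p.1 p.2)
  hφ0 : ∀ ω, φ 0 ω = id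
  hφcocycle : ∀ s t ω, φ (s + t) ω = φ t (θ s ω) ∘ φ s ω

namespace MRDS

variable {Ω X : Type*} [MeasurableSpace Ω] [MetricSpace X]
  [MeasurableSpace X] [BorelSpace X]

/-- The one-point transition probabilities `φ_x^t`. -/
noncomputable def law (R : MRDS Ω X) (x : X) (t : ℕ) : Measure X :=
  R.P.map (fun ω => R.φ t ω x)

/-- A closed set that is forward-invariant for the one-point transition probabilities. -/
def FwdInv (R : MRDS Ω X) (K : Set X) : Prop :=
  IsClosed K ∧ ∀ x ∈ K, ∀ t, R.law x t K = 1

/-- A minimal set: non-empty, closed, forward-invariant, with no proper non-empty closed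
forward-invariant subsets. -/
def Minimal (R : MRDS Ω X) (K : Set X) : Prop :=
  K.Nonempty ∧ R.FwdInv K ∧ ∀ K' ⊆ K, R.FwdInv K' → K' = K ∨ K' = ∅

/-- `A` contracts under the noise realisation `ω`. -/
def contracts (R : MRDS Ω X) (ω : Ω) (A : Set X) : Prop :=
  Tendsto (fun t => EMetric.diam (R.φ t ω '' A)) atTop (𝓝 0)

/-- `(ω, x)` is an asymptotically stable pair. -/
def stablePair (R : MRDS Ω X) (ω : Ω) (x : X) : Prop :=
  ∃ U ∈ 𝓝 x, R.contracts ω U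

/-- The set of asymptotically stable pairs. -/
def O (R : MRDS Ω X) : Set (Ω × X) := {p | R.stablePair p.1 p.2}

/-- The set of noise realisations under which `U` contracts. -/
def EU (R : MRDS Ω X) (U : Set X) : Set Ω := {ω | R.contracts ω U}

/-- `x` is potentially stable. -/
def potStable (R : MRDS Ω X) (x : X) : Prop := 0 < R.P {ω | R.stablePair ω x}

/-- `x` is almost surely stable. -/
def asStable (R : MRDS Ω X) (x : X) : Prop := R.P {ω | R.stablePair ω x} = 1

/-- `φ` is globally synchronising. -/
def synchronising (R : MRDS Ω X) : Prop :=
  ∀ x y : X,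
    R.P {ω | Tendsto (fun t => dist (R.φ t ω x) (R.φ t ω y)) atTop (𝓝 0)} = 1

/-- `φ` is stably synchronising. -/
def stablySynchronising (R : MRDS Ω X) : Prop :=
  R.synchronising ∧ ∀ x : X, R.asStable x

/-- `ρ` is a stationary measure for the one-point transition probabilities. -/
def stationary (R : MRDS Ω X) (ρ : Measure X) : Prop :=
  ∀ t, ∀ A : Set X, MeasurableSet A → ∫⁻ x, R.law x t A ∂ρ = ρ A

end MRDS

set_option linter.unusedSectionVars false

section Aux

open scoped ENNReal

theorem ProbabilityTheory.Indep.mono_right' {Ω : Type*} {mΩ : MeasurableSpace Ω}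
    {μ : MeasureTheory.Measure Ω} {m1 m2 m2' : MeasurableSpace Ω}
    (h : ProbabilityTheory.Indep m1 m2 μ) (hle : m2' ≤ m2) :
    ProbabilityTheory.Indep m1 m2' μ := by
  rw [ProbabilityTheory.Indep_iff] at h ⊢
  exact fun t1 t2 h1 h2 => h t1 t2 h1 (hle _ h2)

theorem meas_prod_mk' {α β γ : Type*} {ma : MeasurableSpace α} {mb : MeasurableSpace β}
    {mc : MeasurableSpace γ} {f : α → β} {g : α → γ}
    (hf : @Measurable α β ma mb f) (hg : @Measurable α γ ma mc g) :
    @Measurable α (β × γ) ma (mb.prod mc) (fun a => (f a, g a)) := by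
  letI := ma; letI := mb; letI := mc; exact hf.prodMk hg

theorem meas_fst' {α β : Type*} {ma : MeasurableSpace α} {mb : MeasurableSpace β} :
    @Measurable (α × β) α (ma.prod mb) ma Prod.fst := by
  letI := ma; letI := mb; exact measurable_fst

theorem meas_snd' {α β : Type*} {ma : MeasurableSpace α} {mb : MeasurableSpace β} :
    @Measurable (α × β) β (ma.prod mb) mb Prod.snd := by
  letI := ma; letI := mb; exact measurable_snd

theorem meas_const' {α β : Type*} {ma : MeasurableSpace α} {mb : MeasurableSpace β} (b : β) :
    @Measurable α β ma mb (fun _ => b) := by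
  letI := ma; letI := mb; exact measurable_const

theorem meas_dist' {α β : Type*} {ma : MeasurableSpace α} [PseudoMetricSpace β]
    [MeasurableSpace β] [OpensMeasurableSpace β] [SecondCountableTopology β] {f g : α → β}
    (hf : @Measurable α β ma _ f) (hg : @Measurable α β ma _ g) :
    @Measurable α ℝ ma _ (fun a => dist (f a) (g a)) := by
  letI := ma; exact hf.dist hg

theorem meas_indicator_one' {α : Type*} {ma : MeasurableSpace α} {s : Set α}
    (hs : MeasurableSet[ma] s) :
    @Measurable α ℝ≥0∞ ma _ (s.indicator 1) := by
  letI := ma; exact measurable_one.indicator hs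

theorem meas_mul' {α : Type*} {ma : MeasurableSpace α} {f g : α → ℝ≥0∞}
    (hf : @Measurable α ℝ≥0∞ ma _ f) (hg : @Measurable α ℝ≥0∞ ma _ g) :
    @Measurable α ℝ≥0∞ ma _ (fun a => f a * g a) := by
  letI := ma; exact hf.mul hg

namespace MRDS

variable {Ω X : Type*} [mΩ : MeasurableSpace Ω] [MetricSpace X]
  [SecondCountableTopology X] [mX : MeasurableSpace X] [BorelSpace X] (R : MRDS Ω X)

/-- The set of noise realizations hitting an `ε`-close pair before time `T`,
started from `(a, b)`. -/
def hitSet (ε : ℝ) (T : ℕ) (a b : X) : Set Ω :=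
  {ω | ∃ u, u < T ∧ dist (R.φ u ω a) (R.φ u ω b) < ε}

/-- The probability of hitting an `ε`-close pair before time `T`. -/
noncomputable def q (ε : ℝ) (T : ℕ) (a b : X) : ℝ≥0∞ := R.P (R.hitSet ε T a b)

/-- The event that the two trajectories stay `ε`-separated on `[s, N)`. -/
def noHitA (ε : ℝ) (x y : X) (s N : ℕ) : Set Ω :=
  {ω | ∀ t, s ≤ t → t < N → ε ≤ dist (R.φ t ω x) (R.φ t ω y)}

lemma measurable_phi_pt (t : ℕ) (a : X) :
    @Measurable Ω X (R.F t) mX fun ω => R.φ t ω a := by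
  have h1 : @Measurable Ω (Ω × X) (R.F t) ((R.F t).prod mX) (fun ω => (ω, a)) :=
    meas_prod_mk' (@measurable_id Ω (R.F t)) (meas_const' a)
  exact (R.hφmeas t).comp h1

lemma measurableSet_distLt (t : ℕ) (a b : X) (ε : ℝ) :
    MeasurableSet[R.F t] {ω | dist (R.φ t ω a) (R.φ t ω b) < ε} :=
  (meas_dist' (R.measurable_phi_pt t a) (R.measurable_phi_pt t b)) measurableSet_Iio

lemma measurableSet_hitSet (ε : ℝ) (T : ℕ) (a b : X) :
    MeasurableSet[⨆ t, R.F t] (R.hitSet ε T a b) := by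
  have : R.hitSet ε T a b
      = ⋃ u, ⋃ (_ : u < T), {ω | dist (R.φ u ω a) (R.φ u ω b) < ε} := by
    ext ω; simp [hitSet]
  rw [this]
  exact MeasurableSet.iUnion fun u => MeasurableSet.iUnion fun _ =>
    (le_iSup R.F u) _ (R.measurableSet_distLt u a b ε)

lemma measurableSet_hitSet' (ε : ℝ) (T : ℕ) (a b : X) :
    MeasurableSet (R.hitSet ε T a b) :=
  (iSup_le R.hle) _ (R.measurableSet_hitSet ε T a b)

lemma hitSet_mono (ε : ℝ) {T T' : ℕ} (h : T ≤ T') (a b : X) :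
    R.hitSet ε T a b ⊆ R.hitSet ε T' a b := by
  rintro ω ⟨u, hu, hd⟩
  exact ⟨u, lt_of_lt_of_le hu h, hd⟩

lemma q_mono (ε : ℝ) {T T' : ℕ} (h : T ≤ T') (a b : X) :
    R.q ε T a b ≤ R.q ε T' a b :=
  measure_mono (R.hitSet_mono ε h a b)

lemma q_le_one (ε : ℝ) (T : ℕ) (a b : X) : R.q ε T a b ≤ 1 := by
  haveI := R.hprob
  exact prob_le_one

lemma measurableSet_jointHit (ε : ℝ) (T : ℕ) :
    MeasurableSet[(⨆ t, R.F t).prod (mX.prod mX)]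
      {p : Ω × (X × X) | ∃ u, u < T ∧ dist (R.φ u p.1 p.2.1) (R.φ u p.1 p.2.2) < ε} := by
  have key : ∀ u : ℕ,
      MeasurableSet[(R.F u).prod (mX.prod mX)]
        {p : Ω × (X × X) | dist (R.φ u p.1 p.2.1) (R.φ u p.1 p.2.2) < ε} := by
    intro u
    have hfst : @Measurable (Ω × (X × X)) Ω ((R.F u).prod (mX.prod mX)) (R.F u)
        Prod.fst := meas_fst'
    have hsnd : @Measurable (Ω × (X × X)) (X × X) ((R.F u).prod (mX.prod mX)) (mX.prod mX)
        Prod.snd := meas_snd'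
    have h1 : @Measurable (Ω × (X × X)) X ((R.F u).prod (mX.prod mX)) mX
        (fun p => R.φ u p.1 p.2.1) :=
      (R.hφmeas u).comp (meas_prod_mk' hfst (meas_fst'.comp hsnd))
    have h2 : @Measurable (Ω × (X × X)) X ((R.F u).prod (mX.prod mX)) mX
        (fun p => R.φ u p.1 p.2.2) :=
      (R.hφmeas u).comp (meas_prod_mk' hfst (meas_snd'.comp hsnd))
    exact (meas_dist' h1 h2) measurableSet_Iio
  have hle : ∀ u : ℕ,
      (R.F u).prod (mX.prod mX) ≤ (⨆ t, R.F t).prod (mX.prod mX) :=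
    fun u => sup_le_sup (MeasurableSpace.comap_mono (le_iSup R.F u)) le_rfl
  have : {p : Ω × (X × X) | ∃ u, u < T ∧ dist (R.φ u p.1 p.2.1) (R.φ u p.1 p.2.2) < ε}
      = ⋃ u, ⋃ (_ : u < T),
          {p : Ω × (X × X) | dist (R.φ u p.1 p.2.1) (R.φ u p.1 p.2.2) < ε} := by
    ext p; simp
  rw [this]
  exact MeasurableSet.iUnion fun u => MeasurableSet.iUnion fun _ => hle u _ (key u)

set_option maxHeartbeats 1000000 in
lemma indep_fubini {S : Type*} {mS : MeasurableSpace S} (r : ℕ) (W : Ω → S)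
    (hW : @Measurable Ω S (R.F r) mS W) (f : Ω → S → ℝ≥0∞)
    (hf : @Measurable (Ω × S) ℝ≥0∞ ((⨆ t, R.F t).prod mS) _ fun p => f p.1 p.2) :
    ∫⁻ ω, f (R.θ r ω) (W ω) ∂ R.P
      = ∫⁻ w, ∫⁻ ω, f ω w ∂ R.P ∂(@Measure.map Ω S mΩ mS W R.P) := by
  haveI := R.hprob
  have hFle : (⨆ t, R.F t) ≤ mΩ := iSup_le R.hle
  -- θ r is measurable from (Ω, mΩ) to (Ω, ⨆ t, R.F t)
  have hθm : @Measurable Ω Ω mΩ (⨆ t, R.F t) (R.θ r) := by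
    rw [measurable_iff_comap_le, MeasurableSpace.comap_iSup]
    refine iSup_le fun t => ?_
    refine le_trans ?_ (R.hle (t + r))
    exact measurable_iff_comap_le.mp (R.hθmeas t r)
  have hWm : @Measurable Ω S mΩ mS W := hW.mono (R.hle r) le_rfl
  -- Independence of θ r and W
  have hindep2 : ProbabilityTheory.Indep ((⨆ t, R.F t).comap (R.θ r)) (mS.comap W) R.P :=
    ProbabilityTheory.Indep.mono_right' ((R.memless r).symm)
      (measurable_iff_comap_le.mp hW)
  have hindep : @ProbabilityTheory.IndepFun Ω Ω S mΩ (⨆ t, R.F t) mS (R.θ r) W R.P :=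
    (@ProbabilityTheory.IndepFun_iff_Indep Ω Ω S mΩ (⨆ t, R.F t) mS (R.θ r) W R.P).mpr
      hindep2
  have hθae : @AEMeasurable Ω Ω (⨆ t, R.F t) mΩ (R.θ r) R.P :=
    @Measurable.aemeasurable Ω Ω mΩ (⨆ t, R.F t) (R.θ r) R.P hθm
  have hWae : @AEMeasurable Ω S mS mΩ W R.P := hWm.aemeasurable
  -- The joint law is the product law
  have hprod : @Measure.map Ω (Ω × S) mΩ ((⨆ t, R.F t).prod mS) (fun ω => (R.θ r ω, W ω)) R.P
      = @Measure.prod Ω S (⨆ t, R.F t) mS (@Measure.map Ω Ω mΩ (⨆ t, R.F t) (R.θ r) R.P)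
          (@Measure.map Ω S mΩ mS W R.P) :=
    (@ProbabilityTheory.indepFun_iff_map_prod_eq_prod_map_map Ω Ω S mΩ R.P (R.θ r) W
      (⨆ t, R.F t) mS _ hθae hWae).mp hindep
  -- The law of θ r is the trimmed measure
  have hmapθ : @Measure.map Ω Ω mΩ (⨆ t, R.F t) (R.θ r) R.P = R.P.trim hFle := by
    refine @Measure.ext Ω (⨆ t, R.F t) _ _ fun A hA => ?_
    rw [@Measure.map_apply Ω Ω mΩ (⨆ t, R.F t) R.P (R.θ r) hθm A hA,
      trim_measurableSet_eq hFle hA]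
    exact (R.hθpres r).measure_preimage (hFle _ hA).nullMeasurableSet
  haveI hP1 : IsProbabilityMeasure (@Measure.map Ω Ω mΩ (⨆ t, R.F t) (R.θ r) R.P) :=
    @Measure.isProbabilityMeasure_map Ω Ω mΩ (⨆ t, R.F t) R.P _ (R.θ r) hθae
  haveI hP2 : IsProbabilityMeasure (@Measure.map Ω S mΩ mS W R.P) :=
    Measure.isProbabilityMeasure_map hWae
  have hpairm : @Measurable Ω (Ω × S) mΩ ((⨆ t, R.F t).prod mS) (fun ω => (R.θ r ω, W ω)) :=
    meas_prod_mk' hθm hWm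
  calc ∫⁻ ω, f (R.θ r ω) (W ω) ∂ R.P
      = ∫⁻ p, f p.1 p.2 ∂(@Measure.map Ω (Ω × S) mΩ ((⨆ t, R.F t).prod mS)
          (fun ω => (R.θ r ω, W ω)) R.P) := by
        exact (@lintegral_map Ω (Ω × S) mΩ ((⨆ t, R.F t).prod mS) R.P
          (fun p => f p.1 p.2) (fun ω => (R.θ r ω, W ω)) hf hpairm).symm
    _ = ∫⁻ p, f p.1 p.2 ∂(@Measure.prod Ω S (⨆ t, R.F t) mS
          (@Measure.map Ω Ω mΩ (⨆ t, R.F t) (R.θ r) R.P)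
          (@Measure.map Ω S mΩ mS W R.P)) := by rw [hprod]
    _ = ∫⁻ w, ∫⁻ ω, f ω w ∂(@Measure.map Ω Ω mΩ (⨆ t, R.F t) (R.θ r) R.P)
          ∂(@Measure.map Ω S mΩ mS W R.P) := by
        exact @lintegral_prod_symm Ω S (⨆ t, R.F t) mS
          (@Measure.map Ω Ω mΩ (⨆ t, R.F t) (R.θ r) R.P)
          (@Measure.map Ω S mΩ mS W R.P) _ _
          (fun p => f p.1 p.2) hf.aemeasurable
    _ = ∫⁻ w, ∫⁻ ω, f ω w ∂ R.P ∂(@Measure.map Ω S mΩ mS W R.P) := by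
        refine lintegral_congr fun w => ?_
        rw [hmapθ]
        refine lintegral_trim hFle ?_
        exact hf.comp (meas_prod_mk' (@measurable_id Ω (⨆ t, R.F t)) (meas_const' w))

set_option maxHeartbeats 1000000 in
lemma exists_unif [CompactSpace X] (K : Set X) (hcl : IsClosed K) (hKne : K.Nonempty)
    (hcontr : ∀ a ∈ K, ∀ b ∈ K, ∀ ε > (0 : ℝ),
      0 < R.P {ω | ∃ t, dist (R.φ t ω a) (R.φ t ω b) < ε})
    {ε : ℝ} (hε : 0 < ε) :
    ∃ T : ℕ, ∃ δ : ℝ≥0∞, 0 < δ ∧ ∀ a ∈ K, ∀ b ∈ K, δ ≤ R.q ε T a b := by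
  haveI := R.hprob
  -- pointwise positivity at some finite horizon
  have hpt : ∀ p : X × X, p ∈ K ×ˢ K → ∃ T, 0 < R.q ε T p.1 p.2 := by
    intro p hp
    have h1 : 0 < R.P {ω | ∃ t, dist (R.φ t ω p.1) (R.φ t ω p.2) < ε} :=
      hcontr p.1 hp.1 p.2 hp.2 ε hε
    have hU : {ω | ∃ t, dist (R.φ t ω p.1) (R.φ t ω p.2) < ε}
        = ⋃ T, R.hitSet ε T p.1 p.2 := by
      ext ω
      constructor
      · rintro ⟨t, ht⟩
        exact Set.mem_iUnion.mpr ⟨t + 1, t, Nat.lt_succ_self t, ht⟩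
      · intro h
        rcases Set.mem_iUnion.mp h with ⟨T, u, _, hu⟩
        exact ⟨u, hu⟩
    rw [hU] at h1
    by_contra hc
    push_neg at hc
    have hz : R.P (⋃ T, R.hitSet ε T p.1 p.2) = 0 :=
      measure_iUnion_null fun T => le_antisymm (hc T) zero_le
    rw [hz] at h1
    exact lt_irrefl _ h1
  -- neighborhood lower bounds via Fatou
  have hnbhd : ∀ p : X × X, ∃ T : ℕ, ∃ c : ℝ≥0∞,
      p ∈ K ×ˢ K → (0 < c ∧ ∀ᶠ p' in 𝓝 p, c < R.q ε T p'.1 p'.2) := by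
    intro p
    by_cases hp : p ∈ K ×ˢ K
    · obtain ⟨T, hT⟩ := hpt p hp
      have hne0 : R.q ε T p.1 p.2 ≠ 0 := hT.ne'
      have hnetop : R.q ε T p.1 p.2 ≠ ⊤ :=
        (lt_of_le_of_lt (R.q_le_one ε T p.1 p.2) ENNReal.one_lt_top).ne
      refine ⟨T, R.q ε T p.1 p.2 / 2, fun _ => ⟨ENNReal.half_pos hne0, ?_⟩⟩
      by_contra hcon
      rw [Filter.not_eventually] at hcon
      obtain ⟨u, hu_t, hu⟩ := Filter.exists_seq_forall_of_frequently hcon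
      have hule : ∀ n, R.q ε T (u n).1 (u n).2 ≤ R.q ε T p.1 p.2 / 2 :=
        fun n => not_lt.mp (hu n)
      -- Fatou
      have hfatou : R.q ε T p.1 p.2 ≤ R.q ε T p.1 p.2 / 2 := by
        have hpw : ∀ ω, (R.hitSet ε T p.1 p.2).indicator (1 : Ω → ℝ≥0∞) ω
            ≤ Filter.liminf
                (fun n => (R.hitSet ε T (u n).1 (u n).2).indicator (1 : Ω → ℝ≥0∞) ω)
                Filter.atTop := by
          intro ω
          by_cases hω : ω ∈ R.hitSet ε T p.1 p.2
          · obtain ⟨v, hv, hd⟩ := id hω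
            have h1 : Tendsto (fun n => R.φ v ω (u n).1) atTop (𝓝 (R.φ v ω p.1)) :=
              ((R.hφcont v ω).tendsto p.1).comp ((continuous_fst.tendsto p).comp hu_t)
            have h2 : Tendsto (fun n => R.φ v ω (u n).2) atTop (𝓝 (R.φ v ω p.2)) :=
              ((R.hφcont v ω).tendsto p.2).comp ((continuous_snd.tendsto p).comp hu_t)
            have hconv : Tendsto (fun n => dist (R.φ v ω (u n).1) (R.φ v ω (u n).2))
                atTop (𝓝 (dist (R.φ v ω p.1) (R.φ v ω p.2))) := h1.dist h2
            have hev : ∀ᶠ n in atTop, ω ∈ R.hitSet ε T (u n).1 (u n).2 := by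
              filter_upwards [hconv (Iio_mem_nhds hd)] with n hn
              exact ⟨v, hv, hn⟩
            have hone : ∀ᶠ n in atTop,
                (1 : ℝ≥0∞) ≤ (R.hitSet ε T (u n).1 (u n).2).indicator (1 : Ω → ℝ≥0∞) ω :=
              hev.mono fun n hn => by simp [Set.indicator_of_mem hn]
            rw [Set.indicator_of_mem hω]
            exact Filter.le_liminf_of_le (by isBoundedDefault) hone
          · simp [Set.indicator_of_notMem hω]
        calc R.q ε T p.1 p.2
            = ∫⁻ ω, (R.hitSet ε T p.1 p.2).indicator 1 ω ∂ R.P :=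
              (lintegral_indicator_one (R.measurableSet_hitSet' ε T p.1 p.2)).symm
          _ ≤ ∫⁻ ω, Filter.liminf
                (fun n => (R.hitSet ε T (u n).1 (u n).2).indicator 1 ω) Filter.atTop ∂ R.P :=
              lintegral_mono hpw
          _ ≤ Filter.liminf
                (fun n => ∫⁻ ω, (R.hitSet ε T (u n).1 (u n).2).indicator 1 ω ∂ R.P)
                Filter.atTop :=
              lintegral_liminf_le fun n =>
                meas_indicator_one' (R.measurableSet_hitSet' ε T (u n).1 (u n).2)
          _ = Filter.liminf (fun n => R.q ε T (u n).1 (u n).2) Filter.atTop := by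
              refine Filter.liminf_congr (Filter.Eventually.of_forall fun n => ?_)
              exact lintegral_indicator_one (R.measurableSet_hitSet' ε T (u n).1 (u n).2)
          _ ≤ R.q ε T p.1 p.2 / 2 := by
              calc Filter.liminf (fun n => R.q ε T (u n).1 (u n).2) Filter.atTop
                  ≤ Filter.liminf (fun _ => R.q ε T p.1 p.2 / 2) Filter.atTop :=
                    Filter.liminf_le_liminf (Filter.Eventually.of_forall hule)
                _ = R.q ε T p.1 p.2 / 2 := Filter.liminf_const _
      exact absurd hfatou (not_le.mpr (ENNReal.half_lt_self hne0 hnetop))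
    · exact ⟨0, 0, fun h => absurd h hp⟩
  -- extract a finite subcover
  choose T c hTc using hnbhd
  have hKK : IsCompact (K ×ˢ K) := (hcl.isCompact).prod (hcl.isCompact)
  obtain ⟨t, ht⟩ := hKK.elim_nhds_subcover'
    (fun p _ => {p' : X × X | c p < R.q ε (T p) p'.1 p'.2})
    (fun p hp => (hTc p hp).2)
  have htne : t.Nonempty := by
    obtain ⟨a, ha⟩ := hKne
    have hmem : ((a, a) : X × X) ∈ K ×ˢ K := ⟨ha, ha⟩
    rcases Set.mem_iUnion₂.mp (ht hmem) with ⟨p, hp, _⟩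
    exact ⟨p, hp⟩
  refine ⟨t.sup fun p => T ↑p, t.inf' htne fun p => c ↑p, ?_, ?_⟩
  · rw [Finset.lt_inf'_iff]
    exact fun p hp => (hTc ↑p p.2).1
  · intro a ha b hb
    have hmem : ((a, b) : X × X) ∈ K ×ˢ K := ⟨ha, hb⟩
    rcases Set.mem_iUnion₂.mp (ht hmem) with ⟨p, hp, hmem2⟩
    calc t.inf' htne (fun p => c ↑p) ≤ c ↑p := Finset.inf'_le _ hp
      _ ≤ R.q ε (T ↑p) a b := le_of_lt hmem2
      _ ≤ R.q ε (t.sup fun p => T ↑p) a b := R.q_mono ε (Finset.le_sup hp) a b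

set_option maxHeartbeats 2000000 in
lemma step_bound (K : Set X) (hK : R.FwdInv K) {ε : ℝ} {T : ℕ} {δ : ℝ≥0∞}
    (hδ1 : ∀ a ∈ K, ∀ b ∈ K, δ ≤ R.q ε T a b) (x y : X) (hx : x ∈ K) (hy : y ∈ K)
    (s r : ℕ) (hr : s ≤ r) :
    R.P (R.noHitA ε x y s (r + T)) ≤ (1 - δ) * R.P (R.noHitA ε x y s r) := by
  haveI := R.hprob
  have hKmeas : MeasurableSet K := hK.1.measurableSet
  -- `noHitA` is measurable w.r.t. `F N` for horizon `N`
  have hAgen : ∀ N : ℕ, MeasurableSet[R.F N] (R.noHitA ε x y s N) := by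
    intro N
    have hEq : R.noHitA ε x y s N
        = ⋂ t, ⋂ (_ : s ≤ t ∧ t < N), {ω | dist (R.φ t ω x) (R.φ t ω y) < ε}ᶜ := by
      ext ω
      simp only [noHitA, Set.mem_iInter, Set.mem_setOf_eq, Set.mem_compl_iff, not_lt, and_imp]
    rw [hEq]
    refine MeasurableSet.iInter fun t => MeasurableSet.iInter fun htr => ?_
    exact R.hmono (le_of_lt htr.2) _ (R.measurableSet_distLt t x y ε).compl
  have hA : MeasurableSet[R.F r] (R.noHitA ε x y s r) := hAgen r
  -- the `F r`-measurable data
  have hWmeas : @Measurable Ω ((X × X) × ℝ≥0∞) (R.F r) ((mX.prod mX).prod inferInstance)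
      (fun ω => ((R.φ r ω x, R.φ r ω y), (R.noHitA ε x y s r).indicator (1 : Ω → ℝ≥0∞) ω)) :=
    meas_prod_mk' (meas_prod_mk' (R.measurable_phi_pt r x) (R.measurable_phi_pt r y))
      (meas_indicator_one' hA)
  have hWmΩ : @Measurable Ω ((X × X) × ℝ≥0∞) mΩ ((mX.prod mX).prod inferInstance)
      (fun ω => ((R.φ r ω x, R.φ r ω y), (R.noHitA ε x y s r).indicator (1 : Ω → ℝ≥0∞) ω)) :=
    hWmeas.mono (R.hle r) le_rfl
  -- the test function
  have hfmeas : @Measurable (Ω × ((X × X) × ℝ≥0∞)) ℝ≥0∞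
      ((⨆ t, R.F t).prod ((mX.prod mX).prod inferInstance)) _
      (fun p => p.2.2 * ((R.hitSet ε T p.2.1.1 p.2.1.2)ᶜ).indicator (1 : Ω → ℝ≥0∞) p.1) := by
    refine meas_mul' (meas_snd'.comp meas_snd') ?_
    have hJ := (R.measurableSet_jointHit ε T).compl
    have hmap : @Measurable (Ω × ((X × X) × ℝ≥0∞)) (Ω × (X × X))
        ((⨆ t, R.F t).prod ((mX.prod mX).prod inferInstance))
        ((⨆ t, R.F t).prod (mX.prod mX)) (fun p => (p.1, p.2.1)) :=
      meas_prod_mk' meas_fst' (meas_fst'.comp meas_snd')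
    exact (meas_indicator_one' hJ).comp hmap
  -- Fubini via independence
  have hfub := R.indep_fubini r
    (fun ω => ((R.φ r ω x, R.φ r ω y), (R.noHitA ε x y s r).indicator (1 : Ω → ℝ≥0∞) ω))
    hWmeas
    (fun ω' w => w.2 * ((R.hitSet ε T w.1.1 w.1.2)ᶜ).indicator (1 : Ω → ℝ≥0∞) ω')
    hfmeas
  -- splitting of the event
  have hsplit : ∀ ω, (ω ∈ R.noHitA ε x y s (r + T) ↔ ω ∈ R.noHitA ε x y s r ∧
      ∀ u, u < T → ε ≤ dist (R.φ (r + u) ω x) (R.φ (r + u) ω y)) := by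
    intro ω
    constructor
    · intro h
      exact ⟨fun t hst htr => h t hst (by omega), fun u hu => h (r + u) (by omega) (by omega)⟩
    · rintro ⟨h1, h2⟩ t hst htrT
      by_cases htr : t < r
      · exact h1 t hst htr
      · obtain ⟨u, rfl⟩ : ∃ u, t = r + u := ⟨t - r, by omega⟩
        exact h2 u (by omega)
  -- cocycle identity
  have hco : ∀ u (ω : Ω) (z : X), R.φ u (R.θ r ω) (R.φ r ω z) = R.φ (r + u) ω z := by
    intro u ω z
    rw [R.hφcocycle r u ω]
    rfl
  -- pointwise identification of the integrand
  have hLpt : ∀ ω, ((R.noHitA ε x y s r).indicator (1 : Ω → ℝ≥0∞) ω) *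
      ((R.hitSet ε T (R.φ r ω x) (R.φ r ω y))ᶜ).indicator (1 : Ω → ℝ≥0∞) (R.θ r ω)
      = (R.noHitA ε x y s (r + T)).indicator (1 : Ω → ℝ≥0∞) ω := by
    intro ω
    by_cases h1 : ω ∈ R.noHitA ε x y s r
    · by_cases h2 : ∀ u, u < T → ε ≤ dist (R.φ (r + u) ω x) (R.φ (r + u) ω y)
      · have hmem : R.θ r ω ∈ (R.hitSet ε T (R.φ r ω x) (R.φ r ω y))ᶜ := by
          rintro ⟨u, hu, hd⟩
          rw [hco u ω x, hco u ω y] at hd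
          exact absurd hd (not_lt.mpr (h2 u hu))
        rw [Set.indicator_of_mem h1, Set.indicator_of_mem hmem,
          Set.indicator_of_mem ((hsplit ω).mpr ⟨h1, h2⟩)]
        simp
      · push_neg at h2
        obtain ⟨u, hu, hd⟩ := h2
        have hmem : R.θ r ω ∈ R.hitSet ε T (R.φ r ω x) (R.φ r ω y) := by
          refine ⟨u, hu, ?_⟩
          rw [hco u ω x, hco u ω y]
          exact hd
        have hnot : ω ∉ R.noHitA ε x y s (r + T) := by
          intro hcon
          exact absurd (((hsplit ω).mp hcon).2 u hu) (not_le.mpr hd)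
        rw [Set.indicator_of_notMem (Set.notMem_compl_iff.mpr hmem), Set.indicator_of_notMem hnot]
        simp
    · have hnot : ω ∉ R.noHitA ε x y s (r + T) := fun hcon => h1 ((hsplit ω).mp hcon).1
      rw [Set.indicator_of_notMem h1, Set.indicator_of_notMem hnot]
      simp
  -- LHS of the Fubini identity
  have hL : ∫⁻ ω, ((R.noHitA ε x y s r).indicator (1 : Ω → ℝ≥0∞) ω) *
      ((R.hitSet ε T (R.φ r ω x) (R.φ r ω y))ᶜ).indicator (1 : Ω → ℝ≥0∞) (R.θ r ω) ∂ R.P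
      = R.P (R.noHitA ε x y s (r + T)) := by
    rw [lintegral_congr hLpt]
    exact lintegral_indicator_one (R.hle (r + T) _ (hAgen (r + T)))
  -- inner integral
  have hinner : ∀ w : (X × X) × ℝ≥0∞,
      ∫⁻ ω', w.2 * ((R.hitSet ε T w.1.1 w.1.2)ᶜ).indicator (1 : Ω → ℝ≥0∞) ω' ∂ R.P
        = w.2 * (1 - R.q ε T w.1.1 w.1.2) := by
    intro w
    rw [lintegral_const_mul _
        (meas_indicator_one' (R.measurableSet_hitSet' ε T w.1.1 w.1.2).compl),
      lintegral_indicator_one (R.measurableSet_hitSet' ε T w.1.1 w.1.2).compl]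
    congr 1
    rw [measure_compl (R.measurableSet_hitSet' ε T w.1.1 w.1.2) (measure_ne_top _ _),
      measure_univ]
    rfl
  -- the pushforward measure
  set μW := @Measure.map Ω ((X × X) × ℝ≥0∞) mΩ ((mX.prod mX).prod inferInstance)
    (fun ω => ((R.φ r ω x, R.φ r ω y), (R.noHitA ε x y s r).indicator (1 : Ω → ℝ≥0∞) ω))
    R.P with hμW
  -- almost surely the positions remain in K
  have hφxm : Measurable fun ω => R.φ r ω x := (R.measurable_phi_pt r x).mono (R.hle r) le_rfl
  have hφym : Measurable fun ω => R.φ r ω y := (R.measurable_phi_pt r y).mono (R.hle r) le_rfl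
  have hxKz : R.P {ω | R.φ r ω x ∉ K} = 0 := by
    have hlaw := hK.2 x hx r
    rw [MRDS.law, Measure.map_apply hφxm hKmeas] at hlaw
    have hcompl := measure_compl (hφxm hKmeas) (measure_ne_top R.P _)
    rw [measure_univ, hlaw, tsub_self] at hcompl
    exact hcompl
  have hyKz : R.P {ω | R.φ r ω y ∉ K} = 0 := by
    have hlaw := hK.2 y hy r
    rw [MRDS.law, Measure.map_apply hφym hKmeas] at hlaw
    have hcompl := measure_compl (hφym hKmeas) (measure_ne_top R.P _)
    rw [measure_univ, hlaw, tsub_self] at hcompl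
    exact hcompl
  have haeK : ∀ᵐ w ∂μW, w.1.1 ∈ K ∧ w.1.2 ∈ K := by
    rw [MeasureTheory.ae_iff]
    have hsub : {w : (X × X) × ℝ≥0∞ | ¬(w.1.1 ∈ K ∧ w.1.2 ∈ K)}
        ⊆ {w | w.1.1 ∉ K} ∪ {w | w.1.2 ∉ K} := by
      intro w hw
      by_cases h : w.1.1 ∈ K
      · exact Or.inr fun hc => hw ⟨h, hc⟩
      · exact Or.inl h
    have hm1 : MeasurableSet[(mX.prod mX).prod inferInstance]
        {w : (X × X) × ℝ≥0∞ | w.1.1 ∉ K} :=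
      ((meas_fst'.comp meas_fst') : @Measurable ((X × X) × ℝ≥0∞) X
        ((mX.prod mX).prod inferInstance) mX (fun w => w.1.1)) hKmeas.compl
    have hm2 : MeasurableSet[(mX.prod mX).prod inferInstance]
        {w : (X × X) × ℝ≥0∞ | w.1.2 ∉ K} :=
      ((meas_snd'.comp meas_fst') : @Measurable ((X × X) × ℝ≥0∞) X
        ((mX.prod mX).prod inferInstance) mX (fun w => w.1.2)) hKmeas.compl
    have e1 : μW {w : (X × X) × ℝ≥0∞ | w.1.1 ∉ K} = R.P {ω | R.φ r ω x ∉ K} := by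
      rw [hμW, Measure.map_apply hWmΩ hm1]
      rfl
    have e2 : μW {w : (X × X) × ℝ≥0∞ | w.1.2 ∉ K} = R.P {ω | R.φ r ω y ∉ K} := by
      rw [hμW, Measure.map_apply hWmΩ hm2]
      rfl
    refine le_antisymm
      (le_trans (measure_mono hsub) (le_trans (measure_union_le _ _) ?_)) zero_le
    rw [e1, e2, hxKz, hyKz]
    simp
  -- put everything together
  calc R.P (R.noHitA ε x y s (r + T))
      = ∫⁻ w, ∫⁻ ω', w.2 * ((R.hitSet ε T w.1.1 w.1.2)ᶜ).indicator (1 : Ω → ℝ≥0∞) ω'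
          ∂ R.P ∂μW := by
        rw [← hL]
        exact hfub
    _ = ∫⁻ w, w.2 * (1 - R.q ε T w.1.1 w.1.2) ∂μW := lintegral_congr hinner
    _ ≤ ∫⁻ w, w.2 * (1 - δ) ∂μW := by
        refine lintegral_mono_ae (haeK.mono fun w hw => ?_)
        exact mul_le_mul_right (tsub_le_tsub_left (hδ1 w.1.1 hw.1 w.1.2 hw.2) 1) _
    _ = (∫⁻ w, w.2 ∂μW) * (1 - δ) :=
        lintegral_mul_const _ (meas_snd' :
          @Measurable ((X × X) × ℝ≥0∞) ℝ≥0∞ ((mX.prod mX).prod inferInstance) _ Prod.snd)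
    _ = R.P (R.noHitA ε x y s r) * (1 - δ) := by
        congr 1
        rw [hμW, lintegral_map (meas_snd' :
          @Measurable ((X × X) × ℝ≥0∞) ℝ≥0∞ ((mX.prod mX).prod inferInstance) _ Prod.snd)
          hWmΩ]
        exact lintegral_indicator_one (R.hle r _ hA)
    _ = (1 - δ) * R.P (R.noHitA ε x y s r) := mul_comm _ _

lemma tail_zero [CompactSpace X] (K : Set X) (hK : R.FwdInv K)
    (hcontr : ∀ a ∈ K, ∀ b ∈ K, ∀ ε > (0 : ℝ),
      0 < R.P {ω | ∃ t, dist (R.φ t ω a) (R.φ t ω b) < ε})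
    (x y : X) (hx : x ∈ K) (hy : y ∈ K) {ε : ℝ} (hε : 0 < ε) (s : ℕ) :
    R.P {ω | ∀ t, s ≤ t → ε ≤ dist (R.φ t ω x) (R.φ t ω y)} = 0 := by
  haveI := R.hprob
  obtain ⟨T, δ, hδpos, hδ⟩ := R.exists_unif K hK.1 ⟨x, hx⟩ hcontr hε
  have hind : ∀ m : ℕ, R.P (R.noHitA ε x y s (s + m * T)) ≤ (1 - δ) ^ m := by
    intro m
    induction m with
    | zero =>
      have huniv : R.noHitA ε x y s (s + 0 * T) = Set.univ := by
        ext ω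
        simp only [noHitA, Set.mem_setOf_eq, Set.mem_univ, iff_true]
        intro t h1 h2
        omega
      rw [huniv]
      simp
    | succ m ih =>
      have hstep := R.step_bound K hK hδ x y hx hy s (s + m * T) (Nat.le_add_right s _)
      have heq : s + (m + 1) * T = (s + m * T) + T := by ring
      rw [heq]
      calc R.P (R.noHitA ε x y s ((s + m * T) + T))
          ≤ (1 - δ) * R.P (R.noHitA ε x y s (s + m * T)) := hstep
        _ ≤ (1 - δ) * (1 - δ) ^ m := mul_le_mul_right ih _
        _ = (1 - δ) ^ (m + 1) := (pow_succ' _ _).symm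
  have hbound : ∀ m, R.P {ω | ∀ t, s ≤ t → ε ≤ dist (R.φ t ω x) (R.φ t ω y)}
      ≤ (1 - δ) ^ m := by
    intro m
    have hsub : {ω | ∀ t, s ≤ t → ε ≤ dist (R.φ t ω x) (R.φ t ω y)}
        ⊆ R.noHitA ε x y s (s + m * T) := fun ω hω t h1 _ => hω t h1
    exact le_trans (measure_mono hsub) (hind m)
  have hlt1 : (1 : ℝ≥0∞) - δ < 1 := ENNReal.sub_lt_self ENNReal.one_ne_top one_ne_zero hδpos.ne'
  have htend := ENNReal.tendsto_pow_atTop_nhds_zero_of_lt_one hlt1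
  exact le_antisymm (ge_of_tendsto' htend hbound) zero_le

end MRDS

end Aux

/-- If `φ` is two-point contractible on a closed forward-invariant set `K`, then for all
`x, y ∈ K`, almost surely there is an unbounded sequence of times along which the
distance between the two trajectories tends to `0`. -/
theorem stmt14 {Ω X : Type*} [MeasurableSpace Ω] [MetricSpace X] [CompactSpace X]
    [MeasurableSpace X] [BorelSpace X] (R : MRDS Ω X)
    (K : Set X) (hK : R.FwdInv K)
    (hcontr : ∀ x ∈ K, ∀ y ∈ K, ∀ ε > (0 : ℝ),
      0 < R.P {ω | ∃ t, dist (R.φ t ω x) (R.φ t ω y) < ε})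
    (x : X) (hx : x ∈ K) (y : X) (hy : y ∈ K) :
    ∀ᵐ ω ∂ R.P, ∃ u : ℕ → ℕ, StrictMono u ∧
      Tendsto (fun n => dist (R.φ (u n) ω x) (R.φ (u n) ω y)) atTop (𝓝 0) := by
  haveI := R.hprob
  have key : ∀ k s : ℕ, ∀ᵐ ω ∂ R.P,
      ∃ t, s ≤ t ∧ dist (R.φ t ω x) (R.φ t ω y) < 1 / (k + 1 : ℝ) := by
    intro k s
    have hε : (0 : ℝ) < 1 / (k + 1 : ℝ) := by positivity
    have hz := R.tail_zero K hK hcontr x y hx hy hε s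
    rw [MeasureTheory.ae_iff]
    have hEq : {ω | ¬ ∃ t, s ≤ t ∧ dist (R.φ t ω x) (R.φ t ω y) < 1 / (k + 1 : ℝ)}
        = {ω | ∀ t, s ≤ t → 1 / (k + 1 : ℝ) ≤ dist (R.φ t ω x) (R.φ t ω y)} := by
      ext ω
      simp only [Set.mem_setOf_eq, not_exists, not_and, not_lt]
    rw [hEq]
    exact hz
  have key2 : ∀ᵐ ω ∂ R.P, ∀ k s : ℕ,
      ∃ t, s ≤ t ∧ dist (R.φ t ω x) (R.φ t ω y) < 1 / (k + 1 : ℝ) := by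
    rw [MeasureTheory.ae_all_iff]
    intro k
    rw [MeasureTheory.ae_all_iff]
    intro s
    exact key k s
  filter_upwards [key2] with ω H
  choose g hg1 hg2 using H
  refine ⟨fun n => Nat.rec (g 0 0) (fun n p => g (n + 1) (p + 1)) n, ?_, ?_⟩
  · apply strictMono_nat_of_lt_succ
    intro n
    have h1 := hg1 (n + 1) ((Nat.rec (g 0 0) (fun n p => g (n + 1) (p + 1)) n : ℕ) + 1)
    have hred : (Nat.rec (g 0 0) (fun n p => g (n + 1) (p + 1)) (n + 1) : ℕ)
        = g (n + 1) ((Nat.rec (g 0 0) (fun n p => g (n + 1) (p + 1)) n : ℕ) + 1) := rfl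
    rw [hred]
    omega
  · have hbound : ∀ n, dist (R.φ (Nat.rec (g 0 0) (fun n p => g (n + 1) (p + 1)) n : ℕ) ω x)
        (R.φ (Nat.rec (g 0 0) (fun n p => g (n + 1) (p + 1)) n : ℕ) ω y) < 1 / (n + 1 : ℝ) := by
      intro n
      cases n with
      | zero => exact hg2 0 0
      | succ m => exact hg2 (m + 1) ((Nat.rec (g 0 0) (fun n p => g (n + 1) (p + 1)) m : ℕ) + 1)
    exact squeeze_zero (fun n => dist_nonneg) (fun n => le_of_lt (hbound n))
      tendsto_one_div_add_atTop_nhds_zero_nat
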